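/- Let V be a finite vocabulary partitioned into two classes c1 and c2, U : V → ℝ^d an unembedding map, T0 ∈ ℝ^d an initial hidden state, and ℓ ∈ ℝ^d a vector satisfying ⟨U(v), ℓ⟩ = p for all v ∈ c1 and ⟨U(v'), ℓ⟩ = p − d for all v' ∈ c2, with d > 0. Define the softmax next-token probability at hidden state h as Pr(v | h) = exp(⟨U(v), h⟩) / Σ_{v'∈V} exp(⟨U(v'), h⟩). Let r = (Σ_{v∈c2} exp(⟨U(v), T0⟩)) / (Σ_{v∈c1} exp(⟨U(v), T0⟩)). Then for any λ ∈ ℝ and h = T0 + λ·ℓ, the total probability of class c2 equals r·exp(−λd) / (1 + r·exp(−λd)). -/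

import Mathlib

open Finset Real RealInnerProductSpace

theorem softmax_class_prob_eq
    {V : Type*} [Fintype V] [DecidableEq V] [Nonempty V]
    {E : Type*} [NormedAddCommGroup E] [InnerProductSpace ℝ E]
    (U : V → E) (T0 ℓ : E) (c1 c2 : Finset V)
    (hpart : c1 ∪ c2 = Finset.univ) (hdisj : Disjoint c1 c2)
    (hc1 : c1.Nonempty) (hc2 : c2.Nonempty)
    (p d : ℝ) (hd : 0 < d)
    (h1 : ∀ v ∈ c1, ⟪U v, ℓ⟫ = p)
    (h2 : ∀ v ∈ c2, ⟪U v, ℓ⟫ = p - d)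
    (r : ℝ)
    (hr : r = (∑ v ∈ c2, Real.exp ⟪U v, T0⟫) / (∑ v ∈ c1, Real.exp ⟪U v, T0⟫))
    (lam : ℝ) :
    (∑ v ∈ c2, Real.exp ⟪U v, T0 + lam • ℓ⟫) /
      (∑ v : V, Real.exp ⟪U v, T0 + lam • ℓ⟫)
      = r * Real.exp (-(lam * d)) / (1 + r * Real.exp (-(lam * d))) := by
  set S1 := ∑ v ∈ c1, Real.exp ⟪U v, T0⟫ with hS1
  set S2 := ∑ v ∈ c2, Real.exp ⟪U v, T0⟫ with hS2
  have hS1pos : 0 < S1 := Finset.sum_pos (fun v _ => Real.exp_pos _) hc1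
  have hS2pos : 0 < S2 := Finset.sum_pos (fun v _ => Real.exp_pos _) hc2
  have e1 : ∑ v ∈ c1, Real.exp ⟪U v, T0 + lam • ℓ⟫ = S1 * Real.exp (lam * p) := by
    rw [hS1, Finset.sum_mul]
    refine Finset.sum_congr rfl fun v hv => ?_
    rw [inner_add_right, real_inner_smul_right, h1 v hv, Real.exp_add]
  have e2 : ∑ v ∈ c2, Real.exp ⟪U v, T0 + lam • ℓ⟫ = S2 * Real.exp (lam * (p - d)) := by
    rw [hS2, Finset.sum_mul]
    refine Finset.sum_congr rfl fun v hv => ?_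
    rw [inner_add_right, real_inner_smul_right, h2 v hv, Real.exp_add]
  have etot : ∑ v : V, Real.exp ⟪U v, T0 + lam • ℓ⟫ =
      S1 * Real.exp (lam * p) + S2 * Real.exp (lam * (p - d)) := by
    rw [← e1, ← e2, ← Finset.sum_union hdisj, hpart]
  rw [e2, etot, hr]
  have hep : Real.exp (lam * p) ≠ 0 := Real.exp_ne_zero _
  have hexp : Real.exp (lam * (p - d)) = Real.exp (lam * p) * Real.exp (-(lam * d)) := by
    rw [← Real.exp_add]; ring_nf
  rw [hexp]
  field_simp
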